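/- Let X, Y be compact Hausdorff spaces, E, F Banach spaces over 𝕂 ∈ {ℝ, ℂ} with F strictly convex, A a completely regular 𝕂-linear subspace of C(X,E), and B a 𝕂-linear subspace of C(Y,F). Then for any surjective (not necessarily linear) isometry T : A → B there exist a subset Y₀ of Y, a continuous surjection Φ : Y₀ → X, and a family {V_y}_{y∈Y₀} of real-linear operators from E to F with ‖V_y‖ = 1 for all y ∈ Y₀, such that Tf(y) = T0(y) + V_y(f(Φ(y))) for all f ∈ A and all y ∈ Y₀. -/

import Mathlib

open Set Metric

variable {𝕂 : Type*} [RCLike 𝕂]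
variable {X : Type*} [TopologicalSpace X] [CompactSpace X] [T2Space X]
variable {Y : Type*} [TopologicalSpace Y] [CompactSpace Y] [T2Space Y]
variable {E : Type*} [NormedAddCommGroup E] [NormedSpace ℝ E] [NormedSpace 𝕂 E]
  [IsScalarTower ℝ 𝕂 E] [CompleteSpace E]
variable {F : Type*} [NormedAddCommGroup F] [NormedSpace ℝ F] [NormedSpace 𝕂 F]
  [IsScalarTower ℝ 𝕂 F] [CompleteSpace F]

/-- `A` is a completely regular subspace of `C(X,E)`: for each `x ∈ X`, each unit
vector `u ∈ E` and each closed set `C` not containing `x`, there is `f ∈ A` with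
`f x = u`, `‖f‖ = 1` and `f = 0` on `C`. -/
def CompletelyRegularSubspace (A : Subspace 𝕂 C(X, E)) : Prop :=
  ∀ x : X, ∀ u : E, ‖u‖ = 1 → ∀ C : Set X, IsClosed C → x ∉ C →
    ∃ f ∈ A, f x = u ∧ ‖f‖ = 1 ∧ ∀ z ∈ C, f z = 0

set_option maxHeartbeats 2000000 in
/-- Generalization of Cambern's result: if `A` is completely regular and `F` is
strictly convex, then any surjective isometry `T : A → B` is represented on a
subset `Y₀ ⊆ Y` via a continuous surjection `Φ : Y₀ → X` and norm-one
real-linear operators `V_y : E → F`. -/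
theorem stmt17 [Nontrivial E] [StrictConvexSpace ℝ F]
    (A : Subspace 𝕂 C(X, E)) (hA : CompletelyRegularSubspace A)
    (B : Subspace 𝕂 C(Y, F))
    (T : C(X, E) → C(Y, F))
    (hmap : ∀ f ∈ A, T f ∈ B)
    (hsurj : ∀ g ∈ B, ∃ f ∈ A, T f = g)
    (hiso : ∀ f ∈ A, ∀ g ∈ A, ‖T f - T g‖ = ‖f - g‖) :
    ∃ (Y₀ : Set Y) (Φ : Y₀ → X) (V : Y₀ → (E →L[ℝ] F)),
      Continuous Φ ∧
      (∀ x : X, ∃ y : Y₀, Φ y = x) ∧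
      (∀ y : Y₀, ‖V y‖ = 1) ∧
      (∀ f ∈ A, ∀ y : Y₀, T f (y : Y) = T 0 (y : Y) + V y (f (Φ y))) := by
  classical
  -- A is closed under real scalar multiplication
  have hAsm : ∀ (r : ℝ) (f : C(X,E)), f ∈ A → r • f ∈ A := fun r f hf => by
    rw [← algebraMap_smul 𝕂 r f]; exact A.smul_mem _ hf
  -- the linearized map
  set S : C(X,E) → C(Y,F) := fun f => T f - T 0 with hSdef
  have hSnorm : ∀ f ∈ A, ‖S f‖ = ‖f‖ := fun f hf => by
    simpa using hiso f hf 0 A.zero_mem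
  -- Mazur-Ulam: S is additive and ℝ-homogeneous on A
  have hMU : (∀ f ∈ A, ∀ g ∈ A, S (f + g) = S f + S g) ∧
      (∀ (r : ℝ), ∀ f ∈ A, S (r • f) = r • S f) := by
    set A' : Submodule ℝ C(X,E) := A.restrictScalars ℝ with hA'
    set B' : Submodule ℝ C(Y,F) := B.restrictScalars ℝ with hB'
    have hT0 : T 0 ∈ B := hmap 0 A.zero_mem
    let τ : ↥A' → ↥B' := fun f => ⟨T ↑f - T 0, sub_mem (hmap _ f.2) hT0⟩
    have hτiso : Isometry τ := Isometry.of_dist_eq fun f g => by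
      rw [Subtype.dist_eq, Subtype.dist_eq, dist_eq_norm, dist_eq_norm]
      show ‖(T ↑f - T 0) - (T ↑g - T 0)‖ = ‖(↑f : C(X,E)) - ↑g‖
      rw [sub_sub_sub_cancel_right]; exact hiso _ f.2 _ g.2
    have hbij : Function.Bijective τ := by
      refine ⟨hτiso.injective, fun g => ?_⟩
      obtain ⟨f, hf, hTf⟩ := hsurj (↑g + T 0) (add_mem g.2 hT0)
      exact ⟨⟨f, hf⟩, Subtype.ext (by simp [τ, hTf])⟩
    let ψ : ↥A' ≃ᵢ ↥B' := { toEquiv := Equiv.ofBijective τ hbij, isometry_toFun := hτiso }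
    have hψ0 : ψ 0 = 0 := Subtype.ext (by simp [ψ, τ, Equiv.ofBijective])
    let L := ψ.toRealLinearIsometryEquivOfMapZero hψ0
    have hL : ∀ f : ↥A', (↑(L f) : C(Y,F)) = T ↑f - T 0 := fun f => rfl
    constructor
    · intro f hf g hg
      have := L.map_add ⟨f, hf⟩ ⟨g, hg⟩
      have h2 := congrArg (Subtype.val) this
      exact h2
    · intro r f hf
      have := L.map_smul r ⟨f, hf⟩
      have h2 := congrArg (Subtype.val) this
      exact h2
  obtain ⟨hSadd, hSsmul⟩ := hMU
  have hSsub : ∀ f ∈ A, ∀ g ∈ A, S (f - g) = S f - S g := by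
    intro f hf g hg
    have h1 : f - g + g = f := by abel
    have := hSadd (f - g) (sub_mem hf hg) g hg
    rw [h1] at this
    rw [eq_sub_iff_add_eq, ← this]
  -- strict convexity tool
  have hsc : ∀ v w : F, ‖v‖ ≤ 1 → ‖w‖ ≤ 1 → ‖v + w‖ = 2 → v = w ∧ ‖v‖ = 1 := by
    intro v w hv hw hvw
    have hv1 : ‖v‖ = 1 := by
      by_contra h
      have : ‖v‖ < 1 := lt_of_le_of_ne hv h
      have := norm_add_le v w
      linarith
    have hw1 : ‖w‖ = 1 := by
      by_contra h
      have : ‖w‖ < 1 := lt_of_le_of_ne hw h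
      have := norm_add_le v w
      linarith
    exact ⟨eq_of_norm_eq_of_norm_add_eq (hv1.trans hw1.symm) (by rw [hvw, hv1, hw1]; norm_num),
      hv1⟩
  -- the "peaking at x with value u" relation
  set Good : Y → X → E → Prop := fun y x u =>
    ‖u‖ = 1 ∧ ∀ f : C(X,E), f ∈ A → ‖f‖ = 1 → f x = u → ‖S f y‖ = 1 with hGood
  -- common value of peaking functions
  have hcommon : ∀ y x u, Good y x u → ∀ f₁, f₁ ∈ A → ‖f₁‖ = 1 → f₁ x = u →
      ∀ f₂, f₂ ∈ A → ‖f₂‖ = 1 → f₂ x = u → S f₁ y = S f₂ y := by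
    intro y x u hg f₁ h1A h1n h1x f₂ h2A h2n h2x
    set h : C(X,E) := (2⁻¹ : ℝ) • (f₁ + f₂) with hh
    have hhA : h ∈ A := hAsm _ _ (add_mem h1A h2A)
    have hhx : h x = u := by
      simp only [hh, ContinuousMap.smul_apply, ContinuousMap.add_apply, h1x, h2x]
      rw [← two_smul ℝ u, smul_smul]; norm_num
    have hhn : ‖h‖ = 1 := by
      refine le_antisymm ?_ ?_
      · rw [hh, norm_smul]
        have := norm_add_le f₁ f₂
        rw [h1n, h2n] at this
        simp only [norm_inv, Real.norm_ofNat]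
        nlinarith [norm_nonneg (f₁ + f₂)]
      · calc 1 = ‖h x‖ := by rw [hhx, hg.1]
          _ ≤ ‖h‖ := h.norm_coe_le_norm x
    have hSh : ‖S h y‖ = 1 := hg.2 h hhA hhn hhx
    have hval : S h y = (2⁻¹ : ℝ) • (S f₁ y + S f₂ y) := by
      rw [hh, hSsmul _ _ (add_mem h1A h2A), hSadd _ h1A _ h2A]
      rfl
    have hsum : ‖S f₁ y + S f₂ y‖ = 2 := by
      have : ‖S h y‖ = 2⁻¹ * ‖S f₁ y + S f₂ y‖ := by
        rw [hval, norm_smul]; simp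
      rw [hSh] at this; linarith
    have h1 : ‖S f₁ y‖ ≤ 1 := by
      calc ‖S f₁ y‖ ≤ ‖S f₁‖ := (S f₁).norm_coe_le_norm y
        _ = 1 := by rw [hSnorm _ h1A, h1n]
    have h2 : ‖S f₂ y‖ ≤ 1 := by
      calc ‖S f₂ y‖ ≤ ‖S f₂‖ := (S f₂).norm_coe_le_norm y
        _ = 1 := by rw [hSnorm _ h2A, h2n]
    exact (hsc _ _ h1 h2 hsum).1
  have hzero : ∀ y x u, Good y x u → ∀ f ∈ A, f x = 0 → S f y = 0 := by
    intro y x u hg f hfA hfx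
    by_cases hf0 : f = 0
    · rw [hf0]; show (T 0 - T 0) y = 0; simp
    have hfn : 0 < ‖f‖ := norm_pos_iff.mpr hf0
    set t : ℝ := ‖f‖⁻¹ with ht0
    have ht : 0 < t := inv_pos.mpr hfn
    obtain ⟨h₁, h₁A, h₁x, h₁n, -⟩ := hA x u hg.1 ∅ isClosed_empty (by simp)
    set w : F := S h₁ y with hwdef
    have hw : ‖w‖ = 1 := hg.2 h₁ h₁A h₁n h₁x
    have key : ∀ s : ℝ, |s| = t → ∀ ε : ℝ, 0 < ε → ‖w + s • S f y‖ ≤ 1 + t * ε := by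
      intro s hs ε hε
      set C : Set X := {z | ε ≤ ‖f z‖} with hC
      have hCcl : IsClosed C := isClosed_le continuous_const (map_continuous f).norm
      have hxC : x ∉ C := by
        simp only [hC, mem_setOf_eq, hfx, norm_zero, not_le]; exact hε
      obtain ⟨h, hhA, hhx, hhn, hhC⟩ := hA x u hg.1 C hCcl hxC
      have hsfA : s • f ∈ A := hAsm s f hfA
      have hmemb : h + s • f ∈ A := add_mem hhA hsfA
      have hnb : ‖h + s • f‖ ≤ 1 + t * ε := by
        refine (ContinuousMap.norm_le _ (by positivity)).mpr fun z => ?_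
        rw [ContinuousMap.add_apply, ContinuousMap.smul_apply]
        by_cases hz : z ∈ C
        · rw [hhC z hz, zero_add, norm_smul, Real.norm_eq_abs, hs]
          calc t * ‖f z‖ ≤ t * ‖f‖ := by gcongr; exact f.norm_coe_le_norm z
            _ = 1 := inv_mul_cancel₀ (ne_of_gt hfn)
            _ ≤ 1 + t * ε := le_add_of_nonneg_right (by positivity)
        · have hlt : ‖f z‖ < ε := not_le.mp hz
          calc ‖h z + s • f z‖ ≤ ‖h z‖ + ‖s • f z‖ := norm_add_le _ _
            _ ≤ 1 + t * ε := by
                have h1 : ‖h z‖ ≤ 1 := hhn ▸ h.norm_coe_le_norm z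
                have h2 : ‖s • f z‖ = t * ‖f z‖ := by
                  rw [norm_smul, Real.norm_eq_abs, hs]
                nlinarith
      have hv : S (h + s • f) y = w + s • S f y := by
        rw [hSadd _ hhA _ hsfA, hSsmul s f hfA]
        have hcv : S h y = w := hcommon y x u hg h hhA hhn hhx h₁ h₁A h₁n h₁x
        rw [ContinuousMap.add_apply, ContinuousMap.smul_apply, hcv]
      calc ‖w + s • S f y‖ = ‖S (h + s • f) y‖ := by rw [hv]
        _ ≤ ‖S (h + s • f)‖ := (S _).norm_coe_le_norm y
        _ = ‖h + s • f‖ := hSnorm _ hmemb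
        _ ≤ 1 + t * ε := hnb
    have key2 : ∀ s : ℝ, |s| = t → ‖w + s • S f y‖ ≤ 1 := by
      intro s hs
      by_contra hgt
      push_neg at hgt
      have hεpos : 0 < (‖w + s • S f y‖ - 1) / (2 * t) := div_pos (by linarith) (by positivity)
      have hk := key s hs _ hεpos
      have htε : t * ((‖w + s • S f y‖ - 1) / (2 * t)) = (‖w + s • S f y‖ - 1) / 2 := by
        field_simp
      rw [htε] at hk
      linarith
    have h1 := key2 t (abs_of_pos ht)
    have h2 := key2 (-t) (by rw [abs_neg, abs_of_pos ht])
    have hsum : ‖(w + t • S f y) + (w + (-t) • S f y)‖ = 2 := by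
      have heq : (w + t • S f y) + (w + (-t) • S f y) = (2:ℝ) • w := by
        rw [neg_smul, two_smul]; abel
      rw [heq, norm_smul, hw]; norm_num
    have heq2 := (hsc _ _ h1 h2 hsum).1
    have h3 : t • S f y = (-t) • S f y := add_left_cancel heq2
    rw [neg_smul, eq_neg_iff_add_eq_zero, ← two_smul ℝ, smul_smul] at h3
    have h2t : (2 * t) ≠ 0 := by positivity
    exact (smul_eq_zero.mp h3).resolve_left h2t
  -- uniqueness of the point x
  have huniq : ∀ y x u x' u', Good y x u → Good y x' u' → x = x' := by
    intro y x u x' u' hg hg'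
    by_contra hne
    obtain ⟨f, hfA, hfx, hfn, hfC⟩ := hA x u hg.1 {x'} isClosed_singleton (by simpa using hne)
    have h1 : ‖S f y‖ = 1 := hg.2 f hfA hfn hfx
    have h0 : S f y = 0 := hzero y x' u' hg' f hfA (hfC x' rfl)
    rw [h0] at h1; norm_num at h1
  obtain ⟨u₀, hu₀⟩ : ∃ u : E, ‖u‖ = 1 := (exists_norm_eq E zero_le_one).imp fun _ h => h
  -- existence of peak points
  have hex : ∀ x : X, ∃ y, Good y x u₀ := by
    intro x
    haveI hιne : Nonempty {f : C(X,E) // f ∈ A ∧ ‖f‖ = 1 ∧ f x = u₀} := by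
      obtain ⟨f, hfA, hfx, hfn, -⟩ := hA x u₀ hu₀ ∅ isClosed_empty (by simp)
      exact ⟨⟨f, hfA, hfn, hfx⟩⟩
    have hle1 : ∀ f : {f : C(X,E) // f ∈ A ∧ ‖f‖ = 1 ∧ f x = u₀}, ∀ y : Y,
        ‖S ↑f y‖ ≤ 1 := fun f y => by
      calc ‖S ↑f y‖ ≤ ‖S ↑f‖ := (S _).norm_coe_le_norm y
        _ = 1 := by rw [hSnorm _ f.2.1, f.2.2.1]
    haveI hNY : Nonempty Y := by
      obtain ⟨f⟩ := hιne
      by_contra hn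
      rw [not_nonempty_iff] at hn
      have hle : ‖S ↑f‖ ≤ 0 := (ContinuousMap.norm_le _ le_rfl).mpr fun y => isEmptyElim y
      rw [hSnorm _ f.2.1, f.2.2.1] at hle; linarith
    set K : {f : C(X,E) // f ∈ A ∧ ‖f‖ = 1 ∧ f x = u₀} → Set Y :=
      fun f => {y | ‖S ↑f y‖ = 1} with hK
    have hKcl : ∀ f, IsClosed (K f) := fun f =>
      isClosed_eq (map_continuous (S ↑f)).norm continuous_const
    have hKne : ∀ f, (K f).Nonempty := by
      intro f
      obtain ⟨y, -, hy⟩ := isCompact_univ.exists_isMaxOn univ_nonempty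
        (map_continuous (S ↑f)).norm.continuousOn
      refine ⟨y, le_antisymm (hle1 f y) ?_⟩
      have hb : ‖S ↑f‖ ≤ ‖S ↑f y‖ :=
        (ContinuousMap.norm_le _ (norm_nonneg _)).mpr fun z => hy (mem_univ z)
      rw [hSnorm _ f.2.1, f.2.2.1] at hb; exact hb
    have hdir : Directed (· ⊇ ·) K := by
      rintro f g
      have hhA : (2⁻¹:ℝ) • ((f:C(X,E)) + ↑g) ∈ A := hAsm _ _ (add_mem f.2.1 g.2.1)
      have hhx : ((2⁻¹:ℝ) • ((f:C(X,E)) + ↑g)) x = u₀ := by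
        simp only [ContinuousMap.smul_apply, ContinuousMap.add_apply, f.2.2.2, g.2.2.2]
        rw [← two_smul ℝ u₀, smul_smul]; norm_num
      have hhn : ‖(2⁻¹:ℝ) • ((f:C(X,E)) + ↑g)‖ = 1 := by
        refine le_antisymm ?_ ?_
        · rw [norm_smul]
          have hnadd := norm_add_le (f:C(X,E)) ↑g
          rw [f.2.2.1, g.2.2.1] at hnadd
          simp only [norm_inv, Real.norm_ofNat]
          nlinarith [norm_nonneg ((f:C(X,E)) + ↑g)]
        · calc 1 = ‖((2⁻¹:ℝ) • ((f:C(X,E)) + ↑g)) x‖ := by rw [hhx, hu₀]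
            _ ≤ _ := ContinuousMap.norm_coe_le_norm _ x
      have hsub : ∀ y, ‖S ((2⁻¹:ℝ) • ((f:C(X,E)) + ↑g)) y‖ = 1 →
          S (f:C(X,E)) y = S (g:C(X,E)) y ∧ ‖S (f:C(X,E)) y‖ = 1 := by
        intro y hyv
        have hval : S ((2⁻¹:ℝ) • ((f:C(X,E)) + ↑g)) y
            = (2⁻¹ : ℝ) • (S ↑f y + S ↑g y) := by
          rw [hSsmul _ _ (add_mem f.2.1 g.2.1), hSadd _ f.2.1 _ g.2.1]
          rfl
        have hsum : ‖S (f:C(X,E)) y + S ↑g y‖ = 2 := by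
          rw [hval, norm_smul] at hyv
          simp only [norm_inv, Real.norm_ofNat] at hyv
          linarith
        obtain ⟨hfg1, hfg2⟩ := hsc _ _ (hle1 f y) (hle1 g y) hsum
        exact ⟨hfg1, hfg2⟩
      refine ⟨⟨_, hhA, hhn, hhx⟩, ?_, ?_⟩
      · intro y hy
        exact (hsub y hy).2
      · intro y hy
        have h2 := hsub y hy
        show ‖S (g:C(X,E)) y‖ = 1
        rw [← h2.1]; exact h2.2
    obtain ⟨y, hy⟩ := IsCompact.nonempty_iInter_of_directed_nonempty_isCompact_isClosed
      K hdir hKne (fun f => (hKcl f).isCompact) hKcl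
    exact ⟨y, hu₀, fun f hfA hfn hfx => mem_iInter.mp hy ⟨f, hfA, hfn, hfx⟩⟩
  -- norm-controlled extension from a point
  have hExt : ∀ (x : X) (e : E), ∃ g : C(X,E), g ∈ A ∧ g x = e ∧ ‖g‖ ≤ ‖e‖ := by
    intro x e
    by_cases he : e = 0
    · exact ⟨0, A.zero_mem, by simp [he], by simp⟩
    · have hne : ‖e‖ ≠ 0 := norm_ne_zero_iff.mpr he
      obtain ⟨f, hfA, hfx, hfn, -⟩ := hA x (‖e‖⁻¹ • e)
        (by rw [norm_smul, norm_inv, norm_norm, inv_mul_cancel₀ hne]) ∅ isClosed_empty (by simp)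
      refine ⟨‖e‖ • f, hAsm _ _ hfA, ?_, ?_⟩
      · rw [ContinuousMap.smul_apply, hfx, smul_smul, mul_inv_cancel₀ hne, one_smul]
      · rw [norm_smul, hfn, norm_norm, mul_one]
  -- the main pointwise construction
  have main : ∀ y : Y, (∃ x u, Good y x u) → ∃ (x : X) (V : E →L[ℝ] F),
      ‖V‖ = 1 ∧ (∀ x' u', Good y x' u' → x' = x) ∧ ∀ f ∈ A, S f y = V (f x) := by
    intro y hy
    obtain ⟨x, u, hgu⟩ := hy
    choose g hgA hgx hgn using hExt x
    have key : ∀ f₁, f₁ ∈ A → ∀ f₂, f₂ ∈ A → f₁ x = f₂ x → S f₁ y = S f₂ y := by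
      intro f₁ hm1 f₂ hm2 hxeq
      have h0 : S (f₁ - f₂) y = 0 := hzero y x u hgu (f₁ - f₂) (sub_mem hm1 hm2)
        (by rw [ContinuousMap.sub_apply, hxeq, sub_self])
      rw [hSsub _ hm1 _ hm2, ContinuousMap.sub_apply, sub_eq_zero] at h0
      exact h0
    set W : E → F := fun e => S (g e) y with hWdef
    have hWf : ∀ f ∈ A, W (f x) = S f y := fun f hf => key _ (hgA _) _ hf (hgx _)
    have hWadd : ∀ e e', W (e + e') = W e + W e' := by
      intro e e'
      have h1 : W (e + e') = S (g e + g e') y :=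
        key _ (hgA _) _ (add_mem (hgA e) (hgA e'))
          (by rw [hgx, ContinuousMap.add_apply, hgx, hgx])
      rw [h1, hSadd _ (hgA e) _ (hgA e'), ContinuousMap.add_apply]
    have hWsmul : ∀ (r : ℝ) e, W (r • e) = r • W e := by
      intro r e
      have h1 : W (r • e) = S (r • g e) y :=
        key _ (hgA _) _ (hAsm r _ (hgA e)) (by rw [hgx, ContinuousMap.smul_apply, hgx])
      rw [h1, hSsmul r _ (hgA e), ContinuousMap.smul_apply]
    have hWb : ∀ e, ‖W e‖ ≤ 1 * ‖e‖ := fun e => by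
      rw [one_mul]
      calc ‖S (g e) y‖ ≤ ‖S (g e)‖ := (S _).norm_coe_le_norm y
        _ = ‖g e‖ := hSnorm _ (hgA e)
        _ ≤ ‖e‖ := hgn e
    set V : E →L[ℝ] F := LinearMap.mkContinuous
      { toFun := W, map_add' := hWadd, map_smul' := fun r e => by simp [hWsmul r e] }
      1 hWb with hVdef
    have hVapp : ∀ e, V e = W e := fun e => rfl
    have hVu : ‖V u‖ = 1 := by
      have hgun : ‖g u‖ = 1 := by
        refine le_antisymm (le_trans (hgn u) (le_of_eq hgu.1)) ?_
        calc 1 = ‖(g u) x‖ := by rw [hgx, hgu.1]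
          _ ≤ ‖g u‖ := ContinuousMap.norm_coe_le_norm _ x
      rw [hVapp]
      exact hgu.2 (g u) (hgA u) hgun (hgx u)
    have hV1 : ‖V‖ = 1 := by
      refine le_antisymm (LinearMap.mkContinuous_norm_le _ zero_le_one _) ?_
      have hb := V.le_opNorm u
      rw [hVu, hgu.1, mul_one] at hb
      exact hb
    exact ⟨x, V, hV1, fun x' u' hg' => huniq y x' u' x u hg' hgu,
      fun f hf => by rw [hVapp, hWf f hf]⟩
  -- assemble
  set Y₀ : Set Y := {y | ∃ x u, Good y x u} with hY₀
  choose Φ V hVn hΦu hrep using fun y : Y₀ => main ↑y y.2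
  refine ⟨Y₀, Φ, V, ?_, ?_, hVn, ?_⟩
  · -- continuity
    rw [continuous_iff_continuousAt]
    intro y
    rw [ContinuousAt, Filter.tendsto_def]
    intro s hs
    rw [_root_.mem_nhds_iff] at hs
    obtain ⟨U, hUs, hUo, hyU⟩ := hs
    obtain ⟨x, u, hg⟩ := y.2
    have hxΦ : x = Φ y := hΦu y x u hg
    have hxU : x ∉ Uᶜ := by rw [hxΦ]; exact fun hc => hc hyU
    obtain ⟨f, hfA, hfx, hfn, hfC⟩ := hA x u hg.1 Uᶜ hUo.isClosed_compl hxU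
    have hfy : ‖S f ↑y‖ = 1 := hg.2 f hfA hfn hfx
    have hWo : IsOpen {y' : Y | 2⁻¹ < ‖S f y'‖} :=
      isOpen_lt continuous_const (map_continuous (S f)).norm
    have hmem : (Subtype.val ⁻¹' {y' : Y | 2⁻¹ < ‖S f y'‖} : Set Y₀) ∈ nhds y := by
      refine (hWo.preimage continuous_subtype_val).mem_nhds ?_
      show (2⁻¹:ℝ) < ‖S f ↑y‖
      rw [hfy]; norm_num
    refine Filter.mem_of_superset hmem ?_
    intro y' hy'
    show Φ y' ∈ s
    by_contra hns
    have hΦU : Φ y' ∈ Uᶜ := fun hc => hns (hUs hc)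
    have h0 : f (Φ y') = 0 := hfC _ hΦU
    have hrw : S f ↑y' = V y' (f (Φ y')) := hrep y' f hfA
    rw [h0, map_zero] at hrw
    have hlt : (2⁻¹ : ℝ) < ‖S f ↑y'‖ := hy'
    rw [hrw, norm_zero] at hlt
    norm_num at hlt
  · -- surjectivity
    intro x
    obtain ⟨y, hy⟩ := hex x
    have hyY : y ∈ Y₀ := ⟨x, u₀, hy⟩
    exact ⟨⟨y, hyY⟩, (hΦu ⟨y, hyY⟩ x u₀ hy).symm⟩
  · -- representation
    intro f hf y
    have := hrep y f hf
    have hSv : S f ↑y = T f ↑y - T 0 ↑y := rfl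
    rw [hSv] at this
    rw [← this]; abel
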